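/- Let B be an atomless complete Boolean algebra, G a locally moving subgroup of Aut(B), f ∈ G, and 0 ≠ a ≤ var(f). Then there exists g ∈ G with var(g) ≤ a and gf ≠ fg. -/

import Mathlib

def fixb {B : Type*} [CompleteBooleanAlgebra B] (g : B ≃o B) : B :=
  sSup {a : B | ∀ b ≤ a, g b = b}

def varb {B : Type*} [CompleteBooleanAlgebra B] (g : B ≃o B) : B :=
  (fixb g)ᶜ

def LocallyMoving {B : Type*} [CompleteBooleanAlgebra B] (G : Subgroup (B ≃o B)) : Prop :=
  ∀ a : B, a ≠ ⊥ → ∃ g ∈ G, g ≠ 1 ∧ varb g ≤ a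

lemma fix_of_le_fixb {B : Type*} [CompleteBooleanAlgebra B] (g : B ≃o B) {x : B}
    (hx : x ≤ fixb g) : g x = x := by
  have hx' : x = ⨆ b ∈ {a : B | ∀ c ≤ a, g c = c}, x ⊓ b := by
    rw [← inf_sSup_eq]
    exact (inf_eq_left.mpr hx).symm
  calc g x = g (⨆ b ∈ {a : B | ∀ c ≤ a, g c = c}, x ⊓ b) := by rw [← hx']
    _ = ⨆ b ∈ {a : B | ∀ c ≤ a, g c = c}, g (x ⊓ b) := by
        rw [map_iSup]; exact iSup_congr fun b => by rw [map_iSup]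
    _ = ⨆ b ∈ {a : B | ∀ c ≤ a, g c = c}, x ⊓ b :=
        iSup_congr fun b => iSup_congr fun hb => hb _ inf_le_right
    _ = x := hx'.symm

/-- If `f ∈ G` and `0 ≠ a ≤ var f`, there is `g ∈ G` with `var g ≤ a` not commuting with `f`. -/
theorem stmt11 {B : Type*} [CompleteBooleanAlgebra B] (hatomless : ∀ x : B, ¬ IsAtom x)
    (G : Subgroup (B ≃o B)) (hG : LocallyMoving G)
    (f : B ≃o B) (hf : f ∈ G) (a : B) (ha : a ≠ ⊥) (hle : a ≤ varb f) :
    ∃ g ∈ G, varb g ≤ a ∧ g * f ≠ f * g := by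
  -- find c ≤ a with f c ≠ c
  have hc : ∃ c ≤ a, f c ≠ c := by
    by_contra h
    push_neg at h
    have haf : a ≤ fixb f := le_sSup (fun c hc => h c hc)
    have : a ≤ ⊥ := by
      have := le_inf haf hle
      rwa [varb, inf_compl_eq_bot] at this
    exact ha (le_bot_iff.mp this)
  obtain ⟨c, hca, hfc⟩ := hc
  -- find b ≤ a, b ≠ ⊥, with f b ⊓ b = ⊥
  have hb : ∃ b ≤ a, b ≠ ⊥ ∧ f b ⊓ b = ⊥ := by
    by_cases h : c \ f c = ⊥
    · have hcfc : c ≤ f c := sdiff_eq_bot_iff.mp h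
      have hfic : f⁻¹ c ≤ c := by
        have := f.symm.monotone hcfc
        simp at this; exact this
      refine ⟨c \ f⁻¹ c, (sdiff_le).trans hca, ?_, ?_⟩
      · intro he
        have h1 : c ≤ f⁻¹ c := sdiff_eq_bot_iff.mp he
        have : f⁻¹ c = c := le_antisymm hfic h1
        apply hfc
        have := congrArg f this
        simpa using this.symm
      · have h1 : (c \ f⁻¹ c) ⊓ f⁻¹ (c \ f⁻¹ c) = ⊥ := by
          have h2 : c \ f⁻¹ c ≤ (f⁻¹ c)ᶜ := by
            rw [sdiff_eq]; exact inf_le_right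
          have h3 : f⁻¹ (c \ f⁻¹ c) ≤ f⁻¹ c := f.symm.monotone sdiff_le
          have := inf_le_inf h2 h3
          rwa [compl_inf_eq_bot, le_bot_iff] at this
        calc f (c \ f⁻¹ c) ⊓ (c \ f⁻¹ c)
            = f ((c \ f⁻¹ c) ⊓ f⁻¹ (c \ f⁻¹ c)) := by
              rw [map_inf]
              congr 1
              exact (f.apply_symm_apply _).symm
          _ = ⊥ := by rw [h1]; exact map_bot f
    · refine ⟨c \ f c, sdiff_le.trans hca, h, ?_⟩
      have h2 : c \ f c ≤ (f c)ᶜ := by rw [sdiff_eq]; exact inf_le_right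
      have h3 : f (c \ f c) ≤ f c := f.monotone sdiff_le
      have := inf_le_inf h3 h2
      rwa [inf_compl_eq_bot, le_bot_iff] at this
  obtain ⟨b, hba, hbne, hfb⟩ := hb
  obtain ⟨g, hgG, hg1, hgb⟩ := hG b hbne
  refine ⟨g, hgG, hgb.trans hba, ?_⟩
  intro hcomm
  apply hg1
  -- g fixes everything below bᶜ
  have hfixc : bᶜ ≤ fixb g := by
    rw [varb] at hgb
    exact compl_le_of_compl_le hgb
  have hfix1 : ∀ x ≤ bᶜ, g x = x := fun x hx => fix_of_le_fixb g (hx.trans hfixc)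
  -- g fixes everything below b
  have hfix2 : ∀ x ≤ b, g x = x := by
    intro x hx
    have hfx : f x ≤ bᶜ := by
      have : f x ≤ f b := f.monotone hx
      have h4 : f b ≤ bᶜ := by
        rw [← disjoint_iff] at hfb
        exact hfb.le_compl_right
      exact this.trans h4
    have h5 : g (f x) = f x := hfix1 _ hfx
    have h6 : g (f x) = f (g x) := by
      have := congrFun (congrArg (fun (h : B ≃o B) => (h : B → B)) hcomm) x
      exact this
    rw [h6] at h5
    exact f.injective h5
  -- hence g = 1
  ext x
  have : g x = g (x ⊓ b ⊔ x ⊓ bᶜ) := by rw [sup_inf_inf_compl]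
  rw [this, map_sup, hfix2 _ inf_le_right, hfix1 _ inf_le_right, sup_inf_inf_compl]
  rfl
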